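/- arXiv:1402.1675 — 3 statements merged into one kernel-verified Lean document; each statement's English description precedes it below -/
import Mathlib

section
/- Let K be any field and let G be a subgroup of S_n. Let G act on the rational function field K(x_1,…,x_n, x_1^{(1)},…,x_n^{(1)},…,x_1^{(m)},…,x_n^{(m)}) in n(m+1) variables by σ(x_i) = x_{σ(i)} and σ(x_i^{(j)}) = x_{σ(i)}^{(j)} for all σ ∈ G, 1 ≤ i ≤ n, 1 ≤ j ≤ m. Then the fixed field of this action equals K(x_1,…,x_n)^G ( t_1^{(1)},…,t_n^{(1)},…,t_1^{(m)},…,t_n^{(m)} ), where t_r^{(j)} = Σ_{i=1}^n x_i^{r−1} x_i^{(j)} for 1 ≤ r ≤ n and 1 ≤ j ≤ m. -/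
noncomputable section

/-- The rational function field `K(x_i : i ∈ I)` over `K`, realized as the fraction field
of the multivariate polynomial ring. -/
abbrev RFF (K : Type) [Field K] (I : Type) := FractionRing (MvPolynomial I K)

/-- The image of the variable `x_i` in the rational function field `K(x_i : i ∈ I)`. -/
noncomputable def Xvar (K : Type) [Field K] (I : Type) (i : I) : RFF K I :=
  algebraMap (MvPolynomial I K) (RFF K I) (MvPolynomial.X i)

/-- Permutations of the variables as `K`-algebra automorphisms of the polynomial ring. -/
def renameHom (K : Type) [Field K] (I : Type) :
    Equiv.Perm I →* (MvPolynomial I K ≃ₐ[K] MvPolynomial I K) where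
  toFun σ := MvPolynomial.renameEquiv K σ
  map_one' := MvPolynomial.renameEquiv_refl K
  map_mul' σ τ := (MvPolynomial.renameEquiv_trans K τ σ).symm

/-- The action of permutations of the variables on `K(x_i : i ∈ I)` by `K`-automorphisms,
determined by `σ(x_i) = x_{σ(i)}`. -/
noncomputable def permHom (K : Type) [Field K] (I : Type) :
    Equiv.Perm I →* (RFF K I ≃ₐ[K] RFF K I) :=
  (IsFractionRing.fieldEquivOfAlgEquivHom K (RFF K I)).comp (renameHom K I)

/-- The fixed field `K(x_i : i ∈ I)^G` of a group `G` of permutations of the variables. -/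
noncomputable def fixedSub (K : Type) [Field K] (I : Type) (G : Subgroup (Equiv.Perm I)) :
    IntermediateField K (RFF K I) :=
  IntermediateField.fixedField (G.map (permHom K I))

/-- An extension `L/K` is `K`-rational if it is purely transcendental over `K`, i.e. generated
by finitely many algebraically independent elements. -/
def IsRatExt (K : Type) [Field K] (L : Type*) [Field L] [Algebra K L] : Prop :=
  ∃ (n : ℕ) (t : Fin n → L), AlgebraicIndependent K t ∧
    IntermediateField.adjoin K (Set.range t) = ⊤

/-- Extension of a permutation `σ` of the `n` variables `x₁,…,xₙ` to a permutation of the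
`n(m+1)` variables `x₁,…,xₙ, x_i^{(j)}` (`1 ≤ i ≤ n`, `1 ≤ j ≤ m`), acting by `σ` on the lower
index everywhere. -/
def extPerm (n m : ℕ) : Equiv.Perm (Fin n) →* Equiv.Perm (Fin n ⊕ Fin n × Fin m) where
  toFun σ := Equiv.sumCongr σ (Equiv.prodCongr σ (Equiv.refl (Fin m)))
  map_one' := by ext x; cases x <;> rfl
  map_mul' a b := by ext x; cases x <;> rfl

set_option maxHeartbeats 2000000
set_option synthInstance.maxHeartbeats 1000000

section
variable (K : Type) [Field K] (I : Type)

theorem permHom_X (σ : Equiv.Perm I) (i : I) :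
    permHom K I σ (Xvar K I i) = Xvar K I (σ i) := by
  simp [permHom, Xvar, renameHom, IsFractionRing.fieldEquivOfAlgEquivHom_apply,
    IsFractionRing.fieldEquivOfAlgEquiv_algebraMap]

theorem Xvar_inj : Function.Injective (Xvar K I) := by
  intro i j h
  have := IsFractionRing.injective (MvPolynomial I K) (RFF K I) h
  exact MvPolynomial.X_injective this

theorem permHom_inj : Function.Injective (permHom K I) := by
  intro σ τ h
  ext i
  have h2 : permHom K I σ (Xvar K I i) = permHom K I τ (Xvar K I i) := by rw [h]
  rw [permHom_X, permHom_X] at h2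
  exact Xvar_inj K I h2

theorem extPerm_inj (n m : ℕ) : Function.Injective (extPerm n m) := by
  intro σ τ h
  ext i
  have h2 : extPerm n m σ (Sum.inl i) = extPerm n m τ (Sum.inl i) := by rw [h]
  simp [extPerm] at h2; rw [h2]

end

namespace FFEV
open IntermediateField

variable (K : Type) [Field K] {n m : ℕ}

abbrev EE (K : Type) [Field K] (n m : ℕ) := RFF K (Fin n ⊕ Fin n × Fin m)

variable (n m) in
def xv (i : Fin n) : EE K n m := Xvar K _ (Sum.inl i)
variable (n m) in
def yv (i : Fin n) (j : Fin m) : EE K n m := Xvar K _ (Sum.inr (i, j))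
variable (n m) in
def tv (r : Fin n) (j : Fin m) : EE K n m := ∑ i, xv K n m i ^ (r : ℕ) * yv K n m i j

variable (m) in
def Gbig (G : Subgroup (Equiv.Perm (Fin n))) : Subgroup (EE K n m ≃ₐ[K] EE K n m) :=
  (G.map (extPerm n m)).map (permHom K _)

variable (m) in
def Ff (G : Subgroup (Equiv.Perm (Fin n))) : IntermediateField K (EE K n m) :=
  IntermediateField.fixedField (Gbig K m G)

variable (n m) in
def Aa : IntermediateField K (EE K n m) :=
  IntermediateField.adjoin K (Set.range (xv K n m))

variable (m) in
def Ll (G : Subgroup (Equiv.Perm (Fin n))) : IntermediateField K (EE K n m) :=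
  IntermediateField.adjoin K
    ((↑(Ff K m G ⊓ Aa K n m) : Set (EE K n m)) ∪
      Set.range (fun rj : Fin n × Fin m => tv K n m rj.1 rj.2))

theorem mem_Ff_iff {G : Subgroup (Equiv.Perm (Fin n))} {z : EE K n m} :
    z ∈ Ff K m G ↔ ∀ σ ∈ G, permHom K _ (extPerm n m σ) z = z := by
  constructor
  · intro h σ hσ
    exact h ⟨permHom K _ (extPerm n m σ), ⟨extPerm n m σ, ⟨σ, hσ, rfl⟩, rfl⟩⟩
  · rintro h ⟨g, ⟨p, ⟨σ, hσ, rfl⟩, rfl⟩⟩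
    exact h σ hσ

theorem tv_mem_Ff (G : Subgroup (Equiv.Perm (Fin n))) (r : Fin n) (j : Fin m) :
    tv K n m r j ∈ Ff K m G := by
  rw [mem_Ff_iff]
  intro σ hσ
  rw [tv, map_sum]
  rw [← Equiv.sum_comp σ (fun i => xv K n m i ^ (r : ℕ) * yv K n m i j)]
  refine Finset.sum_congr rfl fun i _ => ?_
  rw [map_mul, map_pow]
  have h1 : permHom K _ (extPerm n m σ) (xv K n m i) = xv K n m (σ i) := by
    rw [xv, permHom_X]; rfl
  have h2 : permHom K _ (extPerm n m σ) (yv K n m i j) = yv K n m (σ i) j := by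
    rw [yv, permHom_X]; rfl
  rw [h1, h2]

theorem Ll_le_Ff (G : Subgroup (Equiv.Perm (Fin n))) : Ll K m G ≤ Ff K m G := by
  rw [Ll, IntermediateField.adjoin_le_iff]
  rintro z (hz | ⟨rj, rfl⟩)
  · exact (inf_le_left : Ff K m G ⊓ Aa K n m ≤ _) hz
  · exact tv_mem_Ff K G rj.1 rj.2

end FFEV

namespace FFEV
variable (K : Type) [Field K] {n m : ℕ}

def permAction : MulSemiringAction (Equiv.Perm (Fin n)) (EE K n m) :=
  MulSemiringAction.compHom _ ((permHom K _).comp (extPerm n m))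

attribute [local instance] permAction

theorem smul_def (σ : Equiv.Perm (Fin n)) (z : EE K n m) :
    σ • z = permHom K _ (extPerm n m σ) z := rfl

theorem Aa_invariant (σ : Equiv.Perm (Fin n)) {z : EE K n m} (hz : z ∈ Aa K n m) :
    permHom K _ (extPerm n m σ) z ∈ Aa K n m := by
  have h1 : (Aa K n m).map (permHom K _ (extPerm n m σ)).toAlgHom ≤ Aa K n m := by
    rw [Aa, IntermediateField.adjoin_map]
    apply IntermediateField.adjoin_le_iff.2
    rintro w ⟨u, ⟨i, rfl⟩, rfl⟩
    have : (permHom K _ (extPerm n m σ)) (xv K n m i) = xv K n m (σ i) := by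
      rw [xv, permHom_X]; rfl
    rw [AlgEquiv.coe_algHom, this]
    exact IntermediateField.subset_adjoin _ _ ⟨σ i, rfl⟩
  exact h1 ⟨z, hz, rfl⟩

instance : IsInvariantSubfield (Equiv.Perm (Fin n)) (Aa K n m).toSubfield where
  smul_mem σ {z} hz := Aa_invariant K σ hz

def permActionG (G : Subgroup (Equiv.Perm (Fin n))) :
    MulSemiringAction ↥G ↥((Aa K n m).toSubfield) :=
  MulSemiringAction.compHom _ G.subtype

attribute [local instance] permActionG

variable (m) in
def B0 (G : Subgroup (Equiv.Perm (Fin n))) : Subfield ↥((Aa K n m).toSubfield) :=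
  FixedPoints.subfield ↥G ↥((Aa K n m).toSubfield)

theorem B0_coe_mem (G : Subgroup (Equiv.Perm (Fin n))) (b : ↥((Aa K n m).toSubfield))
    (hb : b ∈ B0 K m G) : (↑b : EE K n m) ∈ Ff K m G ⊓ Aa K n m := by
  refine IntermediateField.mem_inf.mpr ⟨?_, b.2⟩
  rw [mem_Ff_iff]
  intro σ hσ
  have := hb ⟨σ, hσ⟩
  have h2 := congrArg (Subtype.val) this
  exact h2

theorem finrank_B0 (G : Subgroup (Equiv.Perm (Fin n))) [Fintype ↥G] :
    Module.finrank (B0 K m G) ↥((Aa K n m).toSubfield) ≤ Fintype.card ↥G :=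
  FixedPoints.finrank_le_card _ _

end FFEV

namespace FFEV
open Matrix
variable (K : Type) [Field K] {n m : ℕ}

theorem inf_le_Ll (G : Subgroup (Equiv.Perm (Fin n))) :
    (↑(Ff K m G ⊓ Aa K n m) : Set (EE K n m)) ⊆ ↑(Ll K m G) :=
  fun z hz => IntermediateField.subset_adjoin _ _ (Set.mem_union_left _ hz)

theorem tv_mem_Ll (G : Subgroup (Equiv.Perm (Fin n))) (r : Fin n) (j : Fin m) :
    tv K n m r j ∈ Ll K m G :=
  IntermediateField.subset_adjoin _ _ (Set.mem_union_right _ ⟨(r, j), rfl⟩)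

theorem Ff_le_Ll (G : Subgroup (Equiv.Perm (Fin n))) : Ff K m G ≤ Ll K m G := by
  classical
  haveI : Fintype ↥G := Fintype.ofFinite _
  haveI hFD : FiniteDimensional (B0 K m G) ↥((Aa K n m).toSubfield) := by
    unfold B0; infer_instance
  set S := (Aa K n m).toSubfield with hS
  set d := Module.finrank (B0 K m G) ↥S with hd
  have hdle : d ≤ Fintype.card ↥G := finrank_B0 K G
  let bas : Module.Basis (Fin d) (B0 K m G) ↥S := Module.finBasis _ _
  let sE : Fin d → EE K n m := fun k => ↑(bas k)
  let W : Submodule ↥(Ll K m G) (EE K n m) := Submodule.span _ (Set.range sE)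
  have hSW : ∀ a : ↥S, (↑a : EE K n m) ∈ W := by
    intro a
    let W' : Submodule (B0 K m G) ↥S :=
      { carrier := {a : ↥S | (↑a : EE K n m) ∈ W}
        add_mem' := fun {x y} hx hy => by
          show ((x + y : ↥S) : EE K n m) ∈ W
          push_cast
          exact W.add_mem hx hy
        zero_mem' := by
          show ((0 : ↥S) : EE K n m) ∈ W
          push_cast
          exact W.zero_mem
        smul_mem' := fun c x hx => by
          show ((c • x : ↥S) : EE K n m) ∈ W
          have h1 : ((c • x : ↥S) : EE K n m) = ((c : ↥S) : EE K n m) * (x : EE K n m) := rfl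
          have h2 : ((c : ↥S) : EE K n m) ∈ Ll K m G :=
            inf_le_Ll K G (B0_coe_mem K G _ c.2)
          have h3 : (⟨((c : ↥S) : EE K n m), h2⟩ : ↥(Ll K m G)) • (x : EE K n m) ∈ W :=
            W.smul_mem _ hx
          rw [h1]
          exact h3 }
    have hle : Submodule.span (B0 K m G) (Set.range bas) ≤ W' := by
      rw [Submodule.span_le]
      rintro b ⟨k, rfl⟩
      exact Submodule.subset_span ⟨k, rfl⟩
    have : a ∈ Submodule.span (B0 K m G) (Set.range bas) := by
      rw [bas.span_eq]; trivial
    exact hle this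
  have hone : (1 : EE K n m) ∈ W := by
    have := hSW 1
    rwa [OneMemClass.coe_one] at this
  have hmulW : ∀ x y : EE K n m, x ∈ W → y ∈ W → x * y ∈ W := by
    intro x y hx hy
    have h2 : W * W ≤ W := by
      rw [Submodule.span_mul_span]
      apply Submodule.span_le.2
      rintro z ⟨a, ⟨i, rfl⟩, b, ⟨k, rfl⟩, rfl⟩
      show sE i * sE k ∈ W
      have : sE i * sE k = ((bas i * bas k : ↥S) : EE K n m) := by push_cast; rfl
      rw [this]
      exact hSW _
    exact h2 (Submodule.mul_mem_mul hx hy)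
  let M : Subalgebra ↥(Ll K m G) (EE K n m) := W.toSubalgebra hone hmulW
  haveI hMfin : Module.Finite ↥(Ll K m G) ↥W :=
    Module.Finite.span_of_finite _ (Set.finite_range sE)
  have hinv : ∀ z : EE K n m, z ∈ M → z⁻¹ ∈ M := by
    intro z hz
    haveI : Module.Finite ↥(Ll K m G) ↥M := hMfin
    have hint : IsIntegral ↥(Ll K m G) (⟨z, hz⟩ : ↥M) := IsIntegral.of_finite _ _
    have halg : IsAlgebraic ↥(Ll K m G) z := (hint.map M.val).isAlgebraic
    exact M.inv_mem_of_algebraic (x := ⟨z, hz⟩) halg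
  let M' : Subfield (EE K n m) := { M.toSubring with inv_mem' := fun z hz => hinv z hz }
  have hLM : ∀ z : EE K n m, z ∈ Ll K m G → z ∈ M := by
    intro z hz
    exact M.algebraMap_mem ⟨z, hz⟩
  have hxM : ∀ i : Fin n, xv K n m i ∈ M := fun i =>
    hSW ⟨xv K n m i, IntermediateField.subset_adjoin _ _ ⟨i, rfl⟩⟩
  have hyM : ∀ (i : Fin n) (j : Fin m), yv K n m i j ∈ M := by
    intro i j
    let xa : Fin n → ↥S := fun i => ⟨xv K n m i, IntermediateField.subset_adjoin _ _ ⟨i, rfl⟩⟩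
    have hxa : Function.Injective xa := by
      intro a b h
      have h1 : Xvar K _ (Sum.inl a) = Xvar K _ (Sum.inl b) := congrArg Subtype.val h
      exact Sum.inl_injective (Xvar_inj K _ h1)
    let WA : Matrix (Fin n) (Fin n) ↥S := (Matrix.vandermonde xa)ᵀ
    have hdet : IsUnit WA.det := by
      rw [Matrix.det_transpose, Matrix.det_vandermonde]
      apply Ne.isUnit
      apply Finset.prod_ne_zero_iff.2
      intro a _
      apply Finset.prod_ne_zero_iff.2
      intro b hb
      exact sub_ne_zero.2 fun h => (Finset.mem_Ioi.1 hb).ne' (hxa h)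
    have hVW : WA⁻¹ * WA = 1 := Matrix.nonsing_inv_mul WA hdet
    let f : ↥S →+* EE K n m := S.subtype
    have hWy : (WA.map f) *ᵥ (fun i => yv K n m i j) = fun r => tv K n m r j := by
      funext r
      have h1 : ((WA.map f) *ᵥ (fun i => yv K n m i j)) r
          = ∑ i, f ((Matrix.vandermonde xa) i r) * yv K n m i j := by
        simp [Matrix.mulVec, dotProduct, WA]
      rw [h1, tv]
      refine Finset.sum_congr rfl fun i _ => ?_
      have h2 : f ((Matrix.vandermonde xa) i r) = xv K n m i ^ (r : ℕ) := by
        rw [Matrix.vandermonde_apply, map_pow]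
        rfl
      rw [h2]
    have hyv : (fun i => yv K n m i j) = (WA⁻¹.map f) *ᵥ (fun r => tv K n m r j) := by
      rw [← hWy, Matrix.mulVec_mulVec, ← Matrix.map_mul, hVW,
        Matrix.map_one f (map_zero f) (map_one f), Matrix.one_mulVec]
    have h3 : yv K n m i j = ∑ r, ((WA⁻¹ i r : ↥S) : EE K n m) * tv K n m r j := by
      have h4 := congrFun hyv i
      rw [h4]
      simp [Matrix.mulVec, dotProduct, f]
    rw [h3]
    exact sum_mem fun r _ => mul_mem (hSW (WA⁻¹ i r)) (hLM _ (tv_mem_Ll K G r j))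
  have hXM : ∀ u : Fin n ⊕ Fin n × Fin m, Xvar K _ u ∈ M' := by
    rintro (i | ⟨i, j⟩)
    · exact hxM i
    · exact hyM i j
  have hpoly : ∀ p : MvPolynomial (Fin n ⊕ Fin n × Fin m) K,
      algebraMap (MvPolynomial (Fin n ⊕ Fin n × Fin m) K) (EE K n m) p ∈ M' := by
    intro p
    induction p using MvPolynomial.induction_on with
    | C a =>
        have h5 : algebraMap (MvPolynomial (Fin n ⊕ Fin n × Fin m) K) (EE K n m)
            (MvPolynomial.C a) = algebraMap K (EE K n m) a := by
          rw [show (MvPolynomial.C a : MvPolynomial (Fin n ⊕ Fin n × Fin m) K)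
            = algebraMap K _ a from rfl, ← IsScalarTower.algebraMap_apply]
        rw [h5]
        exact hLM _ ((Ll K m G).algebraMap_mem a)
    | add p q hp hq => rw [map_add]; exact add_mem hp hq
    | mul_X p i hp => rw [_root_.map_mul]; exact mul_mem hp (hXM i)
  have htop : ∀ z : EE K n m, z ∈ M' := by
    intro z
    obtain ⟨p, q, -, rfl⟩ :=
      IsFractionRing.div_surjective (A := MvPolynomial (Fin n ⊕ Fin n × Fin m) K) z
    exact div_mem (hpoly p) (hpoly q)
  have hWtop : W = ⊤ := by
    rw [Submodule.eq_top_iff']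
    intro z
    exact htop z
  haveI hfinE : Module.Finite ↥(Ll K m G) (EE K n m) := ⟨⟨Finset.univ.image sE, by
    rw [Finset.coe_image, Finset.coe_univ, Set.image_univ]; exact hWtop⟩⟩
  have hrankE : Module.finrank ↥(Ll K m G) (EE K n m) ≤ Fintype.card ↥G := by
    haveI := Set.fintypeRange sE
    have h1 := finrank_span_le_card (R := ↥(Ll K m G)) (Set.range sE)
    have h1' : Module.finrank ↥(Ll K m G) ↥W ≤ (Set.range sE).toFinset.card := h1
    rw [hWtop, finrank_top] at h1'
    refine h1'.trans (le_trans ?_ hdle)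
    rw [Set.toFinset_card]
    exact (Fintype.card_range_le sE).trans (Fintype.card_fin d).le
  let e : ↥G ≃* ↥(Gbig K m G) :=
    (Subgroup.equivMapOfInjective G (extPerm n m) (extPerm_inj n m)).trans
      (Subgroup.equivMapOfInjective (G.map (extPerm n m)) (permHom K _) (permHom_inj K _))
  haveI : Fintype ↥(Gbig K m G) := Fintype.ofEquiv _ e.toEquiv
  have hcard : Fintype.card ↥(Gbig K m G) = Fintype.card ↥G := (Fintype.card_congr e.toEquiv).symm
  haveI : FaithfulSMul ↥(Gbig K m G) (EE K n m) :=
    ⟨fun {g1 g2} h => Subtype.ext (AlgEquiv.ext fun a => h a)⟩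
  have hartin : Module.finrank ↥(FixedPoints.subfield ↥(Gbig K m G) (EE K n m)) (EE K n m)
      = Fintype.card ↥(Gbig K m G) := FixedPoints.finrank_eq_card _ _
  let Φ : Subfield (EE K n m) := FixedPoints.subfield ↥(Gbig K m G) (EE K n m)
  have hFfΦ : ∀ z : EE K n m, z ∈ Ff K m G ↔ z ∈ Φ := fun z => Iff.rfl
  let Φ' : IntermediateField ↥(Ll K m G) (EE K n m) :=
    Subfield.toIntermediateField Φ (fun l => (hFfΦ _).1 (Ll_le_Ff K G l.2))
  have hΦ' : Module.finrank ↥Φ' (EE K n m) = Fintype.card ↥(Gbig K m G) := by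
    rw [← hartin]
    rfl
  haveI : FiniteDimensional ↥(Ll K m G) ↥Φ' := inferInstance
  have htower : Module.finrank ↥(Ll K m G) ↥Φ' * Module.finrank ↥Φ' (EE K n m)
      = Module.finrank ↥(Ll K m G) (EE K n m) := Module.finrank_mul_finrank _ _ _
  have h2 : Module.finrank ↥(Ll K m G) ↥Φ' * Fintype.card ↥G
      = Module.finrank ↥(Ll K m G) (EE K n m) := by
    rw [← hcard, ← hΦ']
    exact htower
  have h1 : Module.finrank ↥(Ll K m G) ↥Φ' ≤ 1 := by
    refine Nat.le_of_mul_le_mul_right ?_ (Fintype.card_pos (α := ↥G))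
    rw [one_mul, h2]
    exact hrankE
  have hbot : Φ' = ⊥ :=
    IntermediateField.finrank_eq_one_iff.1 (le_antisymm h1 Module.finrank_pos)
  intro z hz
  have hzΦ' : z ∈ Φ' := (hFfΦ z).1 hz
  rw [hbot] at hzΦ'
  obtain ⟨l, hl⟩ := IntermediateField.mem_bot.1 hzΦ'
  rw [← hl]
  exact l.2

end FFEV

/-- **A reduction for permutation actions on extra blocks of variables.**
Let `K` be any field and `G ⊆ Sₙ`, acting on the rational function field
`K(x₁,…,xₙ, x_i^{(j)} : 1 ≤ i ≤ n, 1 ≤ j ≤ m)` by `σ(x_i) = x_{σ(i)}`,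
`σ(x_i^{(j)}) = x_{σ(i)}^{(j)}`. Then the fixed field of this action is
`K(x₁,…,xₙ)^G (t_r^{(j)} : 1 ≤ r ≤ n, 1 ≤ j ≤ m)`, where
`t_r^{(j)} = Σ_{i=1}^n x_i^{r−1} x_i^{(j)}`; that is, it is generated over `K` by the
`G`-invariant elements of the subfield `K(x₁,…,xₙ)` together with the elements `t_r^{(j)}`. -/
theorem fixedField_extra_variables (K : Type) [Field K] (n m : ℕ)
    (G : Subgroup (Equiv.Perm (Fin n))) :
    fixedSub K (Fin n ⊕ Fin n × Fin m) (G.map (extPerm n m)) =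
      IntermediateField.adjoin K
        ((↑(fixedSub K (Fin n ⊕ Fin n × Fin m) (G.map (extPerm n m)) ⊓
            IntermediateField.adjoin K
              (Set.range fun i : Fin n => Xvar K (Fin n ⊕ Fin n × Fin m) (Sum.inl i))) :
          Set (RFF K (Fin n ⊕ Fin n × Fin m))) ∪
        Set.range (fun rj : Fin n × Fin m =>
          ∑ i : Fin n, Xvar K (Fin n ⊕ Fin n × Fin m) (Sum.inl i) ^ (rj.1 : ℕ) *
            Xvar K (Fin n ⊕ Fin n × Fin m) (Sum.inr (i, rj.2)))) := by
  show FFEV.Ff K m G = FFEV.Ll K m G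
  exact le_antisymm (FFEV.Ff_le_Ll K G) (FFEV.Ll_le_Ff K G)
end
end

section
/- Let K be a field and let L be an extension field of K generated by elements x_1,…,x_n, y, where x_1,…,x_n are algebraically independent over K and the only relation is y^m = f(x_1,…,x_n), where f is a homogeneous rational function of x_1,…,x_n of degree k (a quotient of homogeneous polynomials whose degrees differ by k). If m and k are coprime, then L is K-rational (a purely transcendental extension of K of transcendence degree n). -/
open IntermediateField Polynomial

section Helpers
variable {K L : Type*} [Field K] [Field L] [Algebra K L] {ι : Type*}

private lemma aeval_mem_alg_adjoin (z : ι → L) (p : MvPolynomial ι K) :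
    MvPolynomial.aeval z p ∈ Algebra.adjoin K (Set.range z) := by
  rw [Algebra.adjoin_range_eq_range_aeval]; exact ⟨p, rfl⟩

private lemma isAlg_up (S : Set L) {w : L} (h : IsAlgebraic (Algebra.adjoin K S) w) :
    IsAlgebraic (IntermediateField.adjoin K S) w :=
  h.tower_top_of_subalgebra_le (IntermediateField.algebra_adjoin_le_adjoin K S)

private lemma isAlg_down (z : ι → L) {w : L}
    (h : IsAlgebraic (IntermediateField.adjoin K (Set.range z)) w) :
    IsAlgebraic (Algebra.adjoin K (Set.range z)) w := by
  classical
  set F₀ := IntermediateField.adjoin K (Set.range z)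
  set R₀ := Algebra.adjoin K (Set.range z)
  obtain ⟨f, hf0, hfw⟩ := h
  choose r s hrs using fun j : ℕ => (mem_adjoin_range_iff K z (f.coeff j : L)).mp (f.coeff j).2
  set D : ℕ → L := fun j => MvPolynomial.aeval z (s j) with hD
  have hDne : ∀ j ∈ f.support, D j ≠ 0 := by
    intro j hj hDj
    apply Polynomial.mem_support_iff.mp hj
    have : (f.coeff j : L) = 0 := by
      rw [hrs j, show MvPolynomial.aeval z (s j) = 0 from hDj, div_zero]
    exact_mod_cast this
  set S : L := ∏ j ∈ f.support, D j with hS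
  have hSne : S ≠ 0 := Finset.prod_ne_zero_iff.mpr hDne
  have hmem : ∀ j, (f.coeff j : L) * S ∈ R₀ := by
    intro j
    by_cases hj : j ∈ f.support
    · have : (f.coeff j : L) * S
          = MvPolynomial.aeval z (r j) * ∏ j' ∈ f.support.erase j, D j' := by
        rw [hrs j, hS, ← Finset.mul_prod_erase _ _ hj]
        field_simp [hDne j hj]
        rw [mul_right_comm]
        exact mul_div_cancel_right₀ _ (hDne j hj)
      rw [this]
      exact mul_mem (aeval_mem_alg_adjoin z (r j))
        (Subalgebra.prod_mem _ fun j' _ => aeval_mem_alg_adjoin z (s j'))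
    · rw [Polynomial.notMem_support_iff.mp hj]
      simpa using zero_mem R₀
  set g : Polynomial R₀ := ∑ j ∈ f.support, Polynomial.C (⟨_, hmem j⟩ : R₀) * X ^ j with hg
  refine ⟨g, ?_, ?_⟩
  · intro hg0
    have hN : f.natDegree ∈ f.support := Polynomial.natDegree_mem_support_of_nonzero hf0
    have : g.coeff f.natDegree = ⟨_, hmem f.natDegree⟩ := by
      rw [hg, Polynomial.finset_sum_coeff]
      rw [Finset.sum_eq_single f.natDegree]
      · simp
      · intro b hb hbne
        simp [Polynomial.coeff_C_mul, Polynomial.coeff_X_pow, hbne.symm]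
      · intro h; exact absurd hN h
    have h2 : ((g.coeff f.natDegree : R₀) : L) = (f.coeff f.natDegree : L) * S :=
      congrArg Subtype.val this
    rw [hg0] at h2
    simp only [Polynomial.coeff_zero, ZeroMemClass.coe_zero] at h2
    exact (mul_ne_zero (by exact_mod_cast Polynomial.leadingCoeff_ne_zero.mpr hf0) hSne) h2.symm
  · have hf' : (Polynomial.aeval w f : L) = ∑ j ∈ f.support, (f.coeff j : L) * w ^ j := by
      rw [Polynomial.aeval_def, Polynomial.eval₂_eq_sum, Polynomial.sum_def]
      rfl
    have hge : Polynomial.aeval w g = (∑ j ∈ f.support, (f.coeff j : L) * w ^ j) * S := by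
      rw [hg, map_sum, Finset.sum_mul]
      refine Finset.sum_congr rfl fun j hj => ?_
      rw [map_mul, Polynomial.aeval_C, map_pow, Polynomial.aeval_X]
      show ((f.coeff j : L) * S) * w ^ j = (f.coeff j : L) * w ^ j * S
      ring
    rw [hge, ← hf', hfw, zero_mul]

private lemma optf {z : ι → L} (hz : AlgebraicIndependent K z) (a : L) :
    AlgebraicIndependent K (fun o : Option ι => o.elim a z) ↔
      Transcendental (IntermediateField.adjoin K (Set.range z)) a :=
  (hz.option_iff_transcendental a).trans
    ⟨fun h H => h (isAlg_down z H), fun h H => h (isAlg_up _ H)⟩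

private lemma exchange [DecidableEq ι] {u v : ι → L} (hu : AlgebraicIndependent K u) (j : ι)
    (hv : ∀ i, i ≠ j → v i = u i)
    (hvj : v j ∈ IntermediateField.adjoin K (Set.range u))
    (huj : u j ∈ IntermediateField.adjoin K (Set.range v)) :
    AlgebraicIndependent K v := by
  classical
  let e : Option {i : ι // i ≠ j} ≃ ι :=
  { toFun := fun o => o.elim j Subtype.val
    invFun := fun i => if h : i = j then none else some ⟨i, h⟩
    left_inv := by
      rintro (_ | ⟨i, hi⟩)
      · simp
      · simp [hi]
    right_inv := fun i => by by_cases h : i = j <;> simp [h] }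
  set z : {i : ι // i ≠ j} → L := fun i => u i.1 with hzdef
  have hue : (fun o : Option {i : ι // i ≠ j} => o.elim (u j) z) = u ∘ e := by
    funext o; rcases o with (_ | ⟨i, hi⟩) <;> rfl
  have hopt : AlgebraicIndependent K (fun o : Option {i : ι // i ≠ j} => o.elim (u j) z) := by
    rw [hue]; exact hu.comp e e.injective
  have hz : AlgebraicIndependent K z := hopt.comp some (Option.some_injective _)
  have hrangev : Set.range v = Set.range z ∪ {v j} := by
    ext w; constructor
    · rintro ⟨i, rfl⟩
      by_cases h : i = j
      · exact Or.inr (by simp [h])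
      · exact Or.inl ⟨⟨i, h⟩, (hv i h).symm ▸ rfl⟩
    · rintro (⟨i, rfl⟩ | h)
      · exact ⟨i.1, hv i.1 i.2⟩
      · exact ⟨j, by simpa using h.symm⟩
  have hujT : Transcendental (IntermediateField.adjoin K (Set.range z)) (u j) :=
    (optf hz (u j)).mp hopt
  have hvjT : Transcendental (IntermediateField.adjoin K (Set.range z)) (v j) := by
    intro Halg
    set F' := IntermediateField.adjoin K (Set.range z)
    have h2 : Algebra.IsAlgebraic F' F'⟮v j⟯ :=
      IntermediateField.isAlgebraic_adjoin_simple Halg.isIntegral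
    have h3 : u j ∈ F'⟮v j⟯ := by
      have : u j ∈ IntermediateField.adjoin K (Set.range z ∪ {v j}) := by
        rw [← hrangev]; exact huj
      rwa [← IntermediateField.adjoin_adjoin_left K (Set.range z) {v j}] at this
    exact hujT (((h2.isAlgebraic ⟨u j, h3⟩).algHom (IntermediateField.val _)))
  have hopt' : AlgebraicIndependent K (fun o : Option {i : ι // i ≠ j} => o.elim (v j) z) :=
    (optf hz (v j)).mpr hvjT
  have hvfun : (fun o : Option {i : ι // i ≠ j} => o.elim (v j) z) ∘ e.symm = v := by
    funext i
    by_cases h : i = j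
    · subst h; simp [e]
    · simp only [Function.comp_apply, e, Equiv.coe_fn_symm_mk, dif_neg h]
      exact (hv i h).symm
  exact (algebraicIndependent_equiv' e.symm hvfun).mpr hopt'

private lemma homog_eval_smul {n a : ℕ} {p : MvPolynomial (Fin n) K} (hp : p.IsHomogeneous a)
    (c : L) (v : Fin n → L) :
    MvPolynomial.aeval (fun i => c * v i) p = c ^ a * MvPolynomial.aeval v p := by
  rw [MvPolynomial.aeval_def, MvPolynomial.aeval_def, MvPolynomial.eval₂_eq,
    MvPolynomial.eval₂_eq, Finset.mul_sum]
  refine Finset.sum_congr rfl fun d hd => ?_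
  have hdeg : Finsupp.degree d = a := by
    by_contra h
    exact MvPolynomial.mem_support_iff.mp hd (hp.coeff_eq_zero h)
  rw [← hdeg, Finsupp.degree_apply]
  simp_rw [mul_pow]
  rw [Finset.prod_mul_distrib, Finset.prod_pow_eq_pow_sum]
  ring

end Helpers

/-- **A rationality criterion (Lemma 2.7).**
Let `L/K` be a field extension generated by elements `x₁,…,xₙ, y`, where `x₁,…,xₙ` are
algebraically independent over `K` and `y^m = f(x₁,…,xₙ)` for a homogeneous rational function
`f` of degree `k` (a quotient of homogeneous polynomials of degrees `a` and `b` with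
`a − b = k`). If `m > 0` and `m` and `k` are coprime, then `L` is `K`-rational:
`L` is purely transcendental over `K` of transcendence degree `n`, i.e. generated over `K`
by `n` algebraically independent elements. -/
theorem rational_of_coprime_relation (K L : Type) [Field K] [Field L] [Algebra K L]
    (n : ℕ) (m : ℕ) (k : ℤ) (x : Fin n → L) (y : L)
    (hx : AlgebraicIndependent K x)
    (hgen : IntermediateField.adjoin K (Set.range x ∪ {y}) = ⊤)
    (hm : 0 < m)
    (hrel : ∃ (a b : ℕ) (p q : MvPolynomial (Fin n) K), p.IsHomogeneous a ∧ q.IsHomogeneous b ∧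
      MvPolynomial.aeval x q ≠ 0 ∧ (a : ℤ) - (b : ℤ) = k ∧
      y ^ m * MvPolynomial.aeval x q = MvPolynomial.aeval x p)
    (hcop : IsCoprime (m : ℤ) k) :
    ∃ t : Fin n → L, AlgebraicIndependent K t ∧
      IntermediateField.adjoin K (Set.range t) = ⊤ := by
  classical
  obtain ⟨a, b, p, q, hp, hq, hq0, hab, hpq⟩ := hrel
  by_cases hy0 : y = 0
  · -- y = 0 : the xᵢ already generate
    refine ⟨x, hx, ?_⟩
    rw [eq_top_iff, ← hgen]
    refine IntermediateField.adjoin_le_iff.mpr ?_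
    rintro w (hw | hw)
    · exact IntermediateField.subset_adjoin K _ hw
    · rw [Set.mem_singleton_iff.mp hw, hy0]
      exact zero_mem _
  -- now y ≠ 0
  cases n with
  | zero =>
    -- no xᵢ: then k = 0, m = 1 and y ∈ K
    obtain ⟨cp, rfl⟩ := MvPolynomial.C_surjective (Fin 0) p
    obtain ⟨cq, rfl⟩ := MvPolynomial.C_surjective (Fin 0) q
    rw [MvPolynomial.aeval_C] at hq0 hpq
    rw [MvPolynomial.aeval_C] at hpq
    have hcq : cq ≠ 0 := fun h => hq0 (by rw [h, map_zero])
    have hcp : cp ≠ 0 := by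
      intro h
      rw [h, map_zero] at hpq
      exact (mul_ne_zero (pow_ne_zero m hy0) hq0) hpq
    have hb0 : b = 0 := by
      by_contra hb
      have : MvPolynomial.coeff 0 (MvPolynomial.C cq : MvPolynomial (Fin 0) K) = 0 :=
        hq.coeff_eq_zero (by simp [Finsupp.degree, Ne.symm hb])
      rw [MvPolynomial.coeff_C] at this
      simp at this
      exact hcq this
    have ha0 : a = 0 := by
      by_contra ha
      have : MvPolynomial.coeff 0 (MvPolynomial.C cp : MvPolynomial (Fin 0) K) = 0 :=
        hp.coeff_eq_zero (by simp [Finsupp.degree, Ne.symm ha])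
      rw [MvPolynomial.coeff_C] at this
      simp at this
      exact hcp this
    have hk0 : k = 0 := by rw [ha0, hb0] at hab; simpa using hab.symm
    have hm1 : m = 1 := by
      rw [hk0] at hcop
      rcases Int.isUnit_iff.mp (isCoprime_zero_right.mp hcop) with h | h
      · exact_mod_cast h
      · omega
    have hybot : y ∈ (⊥ : IntermediateField K L) := by
      rw [IntermediateField.mem_bot]
      refine ⟨cp / cq, ?_⟩
      rw [map_div₀, div_eq_iff hq0]
      rw [hm1, pow_one] at hpq
      exact hpq.symm
    refine ⟨x, hx, ?_⟩
    have hrx : Set.range x = (∅ : Set L) := Set.range_eq_empty x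
    rw [eq_top_iff, ← hgen, hrx]
    rw [Set.empty_union]
    refine IntermediateField.adjoin_le_iff.mpr ?_
    intro w hw
    rw [Set.mem_singleton_iff.mp hw]
    have : y ∈ IntermediateField.adjoin K (∅ : Set L) := by
      have h1 : (⊥ : IntermediateField K L) ≤ IntermediateField.adjoin K (∅ : Set L) := bot_le
      exact h1 hybot
    exact this
  | succ n' =>
    -- main case
    set X0 : L := x 0 with hX0def
    have hX0 : X0 ≠ 0 := by
      intro h0
      exact hx.transcendental 0 (by rw [← hX0def, h0]; exact isAlgebraic_zero)
    set e : Fin (n' + 1) → L := fun i => x i / X0 with hedef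
    set e' : Fin n' → L := fun i => e i.succ with he'def
    set P : L := MvPolynomial.aeval e p with hPdef
    set Q : L := MvPolynomial.aeval e q with hQdef
    have hxe : (fun i => X0 * e i) = x := by
      funext i
      rw [hedef]
      exact mul_div_cancel₀ (x i) hX0
    have hap : MvPolynomial.aeval x p = X0 ^ a * P := by rw [← hxe]; exact homog_eval_smul hp X0 e
    have haq : MvPolynomial.aeval x q = X0 ^ b * Q := by rw [← hxe]; exact homog_eval_smul hq X0 e
    have hQ0 : Q ≠ 0 := by
      intro h; rw [haq, h, mul_zero] at hq0; exact hq0 rfl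
    have hrel2 : y ^ m * (X0 ^ b * Q) = X0 ^ a * P := by rw [← haq, ← hap]; exact hpq
    have hP0 : P ≠ 0 := by
      intro h
      rw [h, mul_zero] at hrel2
      exact (mul_ne_zero (pow_ne_zero m hy0) (mul_ne_zero (pow_ne_zero b hX0) hQ0)) hrel2
    set g : L := P / Q with hgdef
    have hg0 : g ≠ 0 := div_ne_zero hP0 hQ0
    have key : y ^ (m : ℤ) = X0 ^ k * g := by
      rw [← hab, zpow_sub₀ hX0, zpow_natCast, zpow_natCast, zpow_natCast, hgdef,
        div_mul_div_comm, ← hrel2, mul_div_assoc,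
        div_self (mul_ne_zero (pow_ne_zero b hX0) hQ0), mul_one]
    obtain ⟨uu, vv, huv⟩ := hcop
    set t0 : L := y ^ vv * X0 ^ uu with ht0def
    have ht0m : t0 ^ (m : ℤ) = X0 * g ^ vv := by
      calc t0 ^ (m : ℤ) = (y ^ vv * X0 ^ uu) ^ (m : ℤ) := by rw [ht0def]
        _ = y ^ (vv * (m : ℤ)) * X0 ^ (uu * (m : ℤ)) := by
              rw [mul_zpow, ← zpow_mul, ← zpow_mul]
        _ = (y ^ (m : ℤ)) ^ vv * X0 ^ (uu * (m : ℤ)) := by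
              rw [mul_comm vv ((m : ℕ) : ℤ), zpow_mul]
        _ = (X0 ^ k * g) ^ vv * X0 ^ (uu * (m : ℤ)) := by rw [key]
        _ = X0 ^ (k * vv) * X0 ^ (uu * (m : ℤ)) * g ^ vv := by
              rw [mul_zpow, ← zpow_mul]; ring
        _ = X0 ^ (k * vv + uu * (m : ℤ)) * g ^ vv := by rw [zpow_add₀ hX0]
        _ = X0 * g ^ vv := by
              rw [show k * vv + uu * ((m : ℕ) : ℤ) = 1 by linear_combination huv, zpow_one]
    have hX0k : X0 ^ k = y ^ (m : ℤ) * g⁻¹ := by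
      rw [key]; field_simp
    have ht0k : t0 ^ k = y * g ^ (-uu) := by
      calc t0 ^ k = (y ^ vv * X0 ^ uu) ^ k := by rw [ht0def]
        _ = y ^ (vv * k) * (X0 ^ k) ^ uu := by
              rw [mul_zpow, ← zpow_mul y, ← zpow_mul X0, mul_comm uu k, zpow_mul X0]
        _ = y ^ (vv * k) * (y ^ (m : ℤ) * g⁻¹) ^ uu := by rw [hX0k]
        _ = y ^ (vv * k) * y ^ ((m : ℤ) * uu) * g ^ (-uu) := by
              rw [mul_zpow, ← zpow_mul, inv_zpow, ← zpow_neg]; ring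
        _ = y ^ (vv * k + (m : ℤ) * uu) * g ^ (-uu) := by rw [zpow_add₀ hy0]
        _ = y * g ^ (-uu) := by
              rw [show vv * k + ((m : ℕ) : ℤ) * uu = 1 by linear_combination huv, zpow_one]
    -- the new generators
    set t : Fin (n' + 1) → L := Fin.cons t0 e' with htdef
    -- algebraic independence
    have hind : ∀ S : Finset (Fin n'),
        AlgebraicIndependent K
          (Fin.cons X0 (fun i => if i ∈ S then x i.succ / X0 else x i.succ) :
            Fin (n' + 1) → L) := by
      intro S
      induction S using Finset.induction_on with
      | empty =>
        convert hx using 1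
        funext i
        induction i using Fin.cases with
        | zero => simp [hX0def]
        | succ i' => simp
      | @insert j S hj ih =>
        refine exchange ih j.succ ?_ ?_ ?_
        · intro i hi
          induction i using Fin.cases with
          | zero => simp
          | succ i' =>
            have hi' : i' ≠ j := fun h => hi (by rw [h])
            simp [Fin.cons_succ, Finset.mem_insert, hi']
        · have h1 : x j.succ ∈ Set.range (Fin.cons X0
              (fun i => if i ∈ S then x i.succ / X0 else x i.succ) : Fin (n' + 1) → L) :=
            ⟨j.succ, by simp [Fin.cons_succ, hj]⟩
          have h2 : X0 ∈ Set.range (Fin.cons X0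
              (fun i => if i ∈ S then x i.succ / X0 else x i.succ) : Fin (n' + 1) → L) :=
            ⟨0, by simp⟩
          have := div_mem (IntermediateField.subset_adjoin K _ h1)
            (IntermediateField.subset_adjoin K _ h2)
          simpa [Fin.cons_succ, Finset.mem_insert] using this
        · have h1 : x j.succ / X0 ∈ Set.range (Fin.cons X0
              (fun i => if i ∈ insert j S then x i.succ / X0 else x i.succ) : Fin (n' + 1) → L) :=
            ⟨j.succ, by simp [Fin.cons_succ]⟩
          have h2 : X0 ∈ Set.range (Fin.cons X0
              (fun i => if i ∈ insert j S then x i.succ / X0 else x i.succ) : Fin (n' + 1) → L) :=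
            ⟨0, by simp⟩
          have := mul_mem (IntermediateField.subset_adjoin K _ h1)
            (IntermediateField.subset_adjoin K _ h2)
          rw [div_mul_cancel₀ _ hX0] at this
          simpa [Fin.cons_succ, hj] using this
    have hconse : AlgebraicIndependent K (Fin.cons X0 e' : Fin (n' + 1) → L) := by
      have := hind Finset.univ
      convert this using 1
      funext i
      induction i using Fin.cases with
      | zero => simp
      | succ i' => simp [Fin.cons_succ, he'def, hedef]
    have hcomp : ∀ w0 : L, (fun o : Option (Fin n') => o.elim w0 e') ∘ (finSuccEquiv n') =
        (Fin.cons w0 e' : Fin (n' + 1) → L) := by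
      intro w0
      funext i
      induction i using Fin.cases with
      | zero => simp
      | succ i' => simp
    have hopt : AlgebraicIndependent K (fun o : Option (Fin n') => o.elim X0 e') :=
      (algebraicIndependent_equiv' (finSuccEquiv n') (hcomp X0)).mp hconse
    have he' : AlgebraicIndependent K e' := hopt.comp some (Option.some_injective _)
    have hX0T : Transcendental (IntermediateField.adjoin K (Set.range e')) X0 :=
      (optf he' X0).mp hopt
    -- memberships of P, Q, g in the field generated by the ratios
    set F₁ : IntermediateField K L := IntermediateField.adjoin K (Set.range e') with hF₁def
    have heF₁ : ∀ i, e i ∈ F₁ := by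
      intro i
      induction i using Fin.cases with
      | zero =>
        have : e 0 = 1 := div_self hX0
        rw [this]; exact one_mem _
      | succ i' => exact IntermediateField.subset_adjoin K _ ⟨i', rfl⟩
    have halg_le : Algebra.adjoin K (Set.range e) ≤ F₁.toSubalgebra :=
      Algebra.adjoin_le (by rintro w ⟨i, rfl⟩; exact heF₁ i)
    have hPF₁ : P ∈ F₁ := halg_le (aeval_mem_alg_adjoin e p)
    have hQF₁ : Q ∈ F₁ := halg_le (aeval_mem_alg_adjoin e q)
    have hgF₁ : g ∈ F₁ := div_mem hPF₁ hQF₁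
    -- t0 is transcendental over F₁
    have ht0T : Transcendental F₁ t0 := by
      intro Halg
      have h2 : Algebra.IsAlgebraic F₁ F₁⟮t0⟯ :=
        IntermediateField.isAlgebraic_adjoin_simple Halg.isIntegral
      have hgmem : g ∈ F₁⟮t0⟯ := by
        have := F₁⟮t0⟯.algebraMap_mem ⟨g, hgF₁⟩
        exact this
      have ht0mem : t0 ∈ F₁⟮t0⟯ := IntermediateField.mem_adjoin_simple_self F₁ t0
      have hX0mem : X0 ∈ F₁⟮t0⟯ := by
        have hX0eq : X0 = t0 ^ (m : ℤ) * g ^ (-vv) := by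
          rw [ht0m, zpow_neg, mul_assoc, mul_inv_cancel₀ (zpow_ne_zero _ hg0), mul_one]
        rw [hX0eq]
        exact mul_mem (zpow_mem ht0mem _) (zpow_mem hgmem _)
      exact hX0T ((h2.isAlgebraic ⟨X0, hX0mem⟩).algHom (IntermediateField.val _))
    have hoptT : AlgebraicIndependent K (fun o : Option (Fin n') => o.elim t0 e') :=
      (optf he' t0).mpr ht0T
    have hconst : AlgebraicIndependent K t :=
      (algebraicIndependent_equiv' (finSuccEquiv n') (hcomp t0)).mpr hoptT
    -- generation
    refine ⟨t, hconst, ?_⟩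
    set F : IntermediateField K L := IntermediateField.adjoin K (Set.range t) with hFdef
    have ht0F : t0 ∈ F := IntermediateField.subset_adjoin K _ ⟨0, by simp [htdef]⟩
    have heF : ∀ i, e i ∈ F := by
      intro i
      induction i using Fin.cases with
      | zero =>
        have : e 0 = 1 := div_self hX0
        rw [this]; exact one_mem _
      | succ i' =>
        exact IntermediateField.subset_adjoin K _ ⟨i'.succ, by simp [htdef, Fin.cons_succ, he'def]⟩
    have halg_le2 : Algebra.adjoin K (Set.range e) ≤ F.toSubalgebra :=
      Algebra.adjoin_le (by rintro w ⟨i, rfl⟩; exact heF i)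
    have hPF : P ∈ F := halg_le2 (aeval_mem_alg_adjoin e p)
    have hQF : Q ∈ F := halg_le2 (aeval_mem_alg_adjoin e q)
    have hgF : g ∈ F := div_mem hPF hQF
    have hX0F : X0 ∈ F := by
      have hX0eq : X0 = t0 ^ (m : ℤ) * g ^ (-vv) := by
        rw [ht0m, zpow_neg, mul_assoc, mul_inv_cancel₀ (zpow_ne_zero _ hg0), mul_one]
      rw [hX0eq]
      exact mul_mem (zpow_mem ht0F _) (zpow_mem hgF _)
    have hyF : y ∈ F := by
      have hyeq : y = t0 ^ k * g ^ uu := by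
        rw [ht0k, zpow_neg, mul_assoc, inv_mul_cancel₀ (zpow_ne_zero _ hg0), mul_one]
      rw [hyeq]
      exact mul_mem (zpow_mem ht0F _) (zpow_mem hgF _)
    have hxF : ∀ i, x i ∈ F := by
      intro i
      have : x i = e i * X0 := by
        rw [hedef]
        exact (div_mul_cancel₀ (x i) hX0).symm
      rw [this]
      exact mul_mem (heF i) hX0F
    rw [eq_top_iff, ← hgen]
    refine IntermediateField.adjoin_le_iff.mpr ?_
    rintro w (hw | hw)
    · obtain ⟨i, rfl⟩ := hw
      exact hxF i
    · rw [Set.mem_singleton_iff.mp hw]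
      exact hyF
end

section
/- Let K be a field of characteristic 2, and let V_4 ⊂ S_4 be the Klein four-group generated by (1,2)(3,4) and (1,3)(2,4), acting on K(x_1,x_2,x_3,x_4) by permuting the variables. Then the fixed field K(x_1,x_2,x_3,x_4)^{V_4} is generated over K by v_1 = x_1+x_2+x_3+x_4, v_2 = x_1x_2+x_3x_4, v_3 = x_1x_3+x_2x_4, and v_4 = x_1x_4+x_2x_3. -/
noncomputable section

/-! ### Auxiliary material -/

namespace KleinAux

open IntermediateField Module

lemma permHom_Xvar (K : Type) [Field K] (I : Type) (σ : Equiv.Perm I) (i : I) :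
    permHom K I σ (Xvar K I i) = Xvar K I (σ i) := by
  show IsFractionRing.fieldEquivOfAlgEquiv K (RFF K I) (RFF K I)
      (MvPolynomial.renameEquiv K σ) (algebraMap _ _ (MvPolynomial.X i)) = _
  rw [IsFractionRing.fieldEquivOfAlgEquiv_algebraMap]
  simp [Xvar]

lemma two_eq_zero (K : Type) [Field K] [CharP K 2] (I : Type) : (2 : RFF K I) = 0 := by
  have : CharP (RFF K I) 2 :=
    charP_of_injective_algebraMap
      (IsFractionRing.injective (MvPolynomial I K) (RFF K I)) 2
  exact_mod_cast CharP.cast_eq_zero (RFF K I) 2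

lemma Xvar_poly_ne (K : Type) [Field K] (I : Type) {p : MvPolynomial I K} (h : p ≠ 0) :
    algebraMap (MvPolynomial I K) (RFF K I) p ≠ 0 := by
  intro hc
  apply h
  apply IsFractionRing.injective (MvPolynomial I K) (RFF K I)
  rw [hc, map_zero]

lemma permHom_injective (K : Type) [Field K] (I : Type) :
    Function.Injective (permHom K I) := by
  intro σ τ h
  ext i
  have h1 := permHom_Xvar K I σ i
  rw [h, permHom_Xvar] at h1
  have h2 := IsFractionRing.injective (MvPolynomial I K) (RFF K I) h1
  exact (MvPolynomial.X_injective h2).symm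

/-- The variables generate the rational function field. -/
lemma adjoin_range_Xvar (K : Type) [Field K] (I : Type) :
    IntermediateField.adjoin K (Set.range (Xvar K I)) = ⊤ := by
  rw [eq_top_iff]
  intro z _
  obtain ⟨p, q, -, rfl⟩ := IsFractionRing.div_surjective (A := MvPolynomial I K) z
  have hmem : ∀ r : MvPolynomial I K,
      algebraMap (MvPolynomial I K) (RFF K I) r ∈
        IntermediateField.adjoin K (Set.range (Xvar K I)) := by
    intro r
    have hr : r ∈ Algebra.adjoin K (Set.range (MvPolynomial.X : I → MvPolynomial I K)) := by
      rw [MvPolynomial.adjoin_range_X]; trivial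
    induction hr using Algebra.adjoin_induction with
    | mem x hx =>
      obtain ⟨i, rfl⟩ := hx
      exact subset_adjoin K _ ⟨i, rfl⟩
    | algebraMap a =>
      rw [← IsScalarTower.algebraMap_apply]
      exact IntermediateField.algebraMap_mem _ a
    | add a b _ _ ha hb =>
      rw [RingHom.map_add]; exact add_mem ha hb
    | mul a b _ _ ha hb =>
      rw [RingHom.map_mul]; exact mul_mem ha hb
  exact div_mem (hmem p) (hmem q)

end KleinAux

namespace KleinAux

abbrev pa : Equiv.Perm (Fin 4) := Equiv.swap 0 1 * Equiv.swap 2 3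
abbrev pb : Equiv.Perm (Fin 4) := Equiv.swap 0 2 * Equiv.swap 1 3

def kleinW : Subgroup (Equiv.Perm (Fin 4)) where
  carrier := ↑({1, pa, pb, pa * pb} : Finset (Equiv.Perm (Fin 4)))
  one_mem' := by simp
  mul_mem' := by
    intro a b ha hb
    simp only [Finset.coe_insert, Set.mem_insert_iff, Finset.coe_singleton,
      Set.mem_singleton_iff] at *
    rcases ha with rfl | rfl | rfl | rfl <;> rcases hb with rfl | rfl | rfl | rfl <;> decide
  inv_mem' := by
    intro a ha
    simp only [Finset.coe_insert, Set.mem_insert_iff, Finset.coe_singleton,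
      Set.mem_singleton_iff] at *
    rcases ha with rfl | rfl | rfl | rfl <;> decide

lemma mem_kleinW_iff (x : Equiv.Perm (Fin 4)) :
    x ∈ kleinW ↔ x ∈ ({1, pa, pb, pa * pb} : Finset (Equiv.Perm (Fin 4))) := Iff.rfl

lemma closure_eq_kleinW :
    Subgroup.closure {pa, pb} = kleinW := by
  apply le_antisymm
  · rw [Subgroup.closure_le]
    intro x hx
    rcases hx with rfl | rfl <;> · rw [SetLike.mem_coe, mem_kleinW_iff]; decide
  · intro x hx
    rw [mem_kleinW_iff] at hx
    fin_cases hx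
    · exact one_mem _
    · exact Subgroup.subset_closure (by left; rfl)
    · exact Subgroup.subset_closure (by right; rfl)
    · exact mul_mem (Subgroup.subset_closure (by left; rfl))
        (Subgroup.subset_closure (by right; rfl))

lemma card_kleinW : Nat.card kleinW = 4 := by
  have e : ↥kleinW ≃ {x // x ∈ ({1, pa, pb, pa * pb} : Finset (Equiv.Perm (Fin 4)))} :=
    Equiv.subtypeEquivRight fun x => mem_kleinW_iff x
  rw [Nat.card_congr e, Nat.card_eq_fintype_card, Fintype.card_coe]
  decide

end KleinAux

namespace KleinAux

lemma X_add_X_ne (K : Type) [Field K] {i j : Fin 4} (hij : i ≠ j) :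
    Xvar K (Fin 4) i + Xvar K (Fin 4) j ≠ 0 := by
  rw [Xvar, Xvar, ← RingHom.map_add]
  apply Xvar_poly_ne
  intro h
  have h1 := congrArg (MvPolynomial.coeff (Finsupp.single i 1)) h
  simp only [MvPolynomial.coeff_add, MvPolynomial.coeff_zero, MvPolynomial.coeff_X',
    Finsupp.single_eq_single_iff] at h1
  simp [hij.symm] at h1

lemma v1_ne (K : Type) [Field K] :
    Xvar K (Fin 4) 0 + Xvar K (Fin 4) 1 + Xvar K (Fin 4) 2 + Xvar K (Fin 4) 3 ≠ 0 := by
  rw [Xvar, Xvar, Xvar, Xvar, ← RingHom.map_add, ← RingHom.map_add, ← RingHom.map_add]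
  apply Xvar_poly_ne
  intro h
  have h1 := congrArg (MvPolynomial.coeff (Finsupp.single 0 1)) h
  simp only [MvPolynomial.coeff_add, MvPolynomial.coeff_zero, MvPolynomial.coeff_X',
    Finsupp.single_eq_single_iff] at h1
  simp only [show ((1 : Fin 4) = 0) ↔ False from by decide,
    show ((2 : Fin 4) = 0) ↔ False from by decide,
    show ((3 : Fin 4) = 0) ↔ False from by decide, if_true, false_and, false_or,
    if_false, and_true] at h1
  norm_num at h1

end KleinAux

namespace KleinAux

open IntermediateField Module

set_option maxHeartbeats 1000000 in
set_option synthInstance.maxHeartbeats 1000000 in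
/-- General form of the Klein four group fixed-field computation, over an abstract
field extension `L/K` with four "variables" `x0 x1 x2 x3` in characteristic 2. -/
theorem general {K L : Type} [Field K] [Field L] [Algebra K L]
    (x0 x1 x2 x3 : L) (h2 : (2 : L) = 0)
    (hv1ne : x0 + x1 + x2 + x3 ≠ 0)
    (hne01 : x0 + x1 ≠ 0) (hne02 : x0 + x2 ≠ 0) (hne03 : x0 + x3 ≠ 0)
    (htop : IntermediateField.adjoin K {x0, x1, x2, x3} = ⊤)
    (H : Subgroup (L ≃ₐ[K] L)) [Finite ↥H] (hcard : Nat.card ↥H = 4)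
    (hfix : ∀ v ∈ ({x0 + x1 + x2 + x3, x0 * x1 + x2 * x3,
        x0 * x2 + x1 * x3, x0 * x3 + x1 * x2} : Set L), ∀ g ∈ H, g v = v) :
    IntermediateField.fixedField H =
      IntermediateField.adjoin K
        {x0 + x1 + x2 + x3, x0 * x1 + x2 * x3, x0 * x2 + x1 * x3, x0 * x3 + x1 * x2} := by
  classical
  set S : Set L :=
    {x0 + x1 + x2 + x3, x0 * x1 + x2 * x3, x0 * x2 + x1 * x3, x0 * x3 + x1 * x2} with hS
  set E := IntermediateField.adjoin K S with hE
  -- memberships of the generators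
  have hv1 : x0 + x1 + x2 + x3 ∈ E := IntermediateField.subset_adjoin K S (by
    rw [hS]; left; rfl)
  have hv2 : x0 * x1 + x2 * x3 ∈ E := IntermediateField.subset_adjoin K S (by
    rw [hS]; right; left; rfl)
  have hv3 : x0 * x2 + x1 * x3 ∈ E := IntermediateField.subset_adjoin K S (by
    rw [hS]; right; right; left; rfl)
  have hv4 : x0 * x3 + x1 * x2 ∈ E := IntermediateField.subset_adjoin K S (by
    rw [hS]; right; right; right; rfl)
  have hdne : (x0 + x1 + x2 + x3) * x0 ^ 2
      + (x0 * x1 * x2 + x0 * x1 * x3 + x0 * x2 * x3 + x1 * x2 * x3) ≠ 0 := by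
    have hfac : (x0 + x1 + x2 + x3) * x0 ^ 2
        + (x0 * x1 * x2 + x0 * x1 * x3 + x0 * x2 * x3 + x1 * x2 * x3)
        = (x0 + x1) * (x0 + x2) * (x0 + x3) := by ring
    rw [hfac]
    exact mul_ne_zero (mul_ne_zero hne01 hne02) hne03
  -- the symmetric functions e2, e3, e4 lie in E
  have hE2 : (x0 * x1 + x2 * x3) + (x0 * x2 + x1 * x3) + (x0 * x3 + x1 * x2) ∈ E :=
    add_mem (add_mem hv2 hv3) hv4
  have hE3 : x0 * x1 * x2 + x0 * x1 * x3 + x0 * x2 * x3 + x1 * x2 * x3 ∈ E := by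
    have hid : x0 * x1 * x2 + x0 * x1 * x3 + x0 * x2 * x3 + x1 * x2 * x3
        = ((x0 * x1 + x2 * x3) * (x0 * x2 + x1 * x3)
            + (x0 * x1 + x2 * x3) * (x0 * x3 + x1 * x2)
            + (x0 * x2 + x1 * x3) * (x0 * x3 + x1 * x2)) / (x0 + x1 + x2 + x3) := by
      rw [eq_div_iff hv1ne]
      linear_combination (2 * x0 * x1 * x2 * x3) * h2
    rw [hid]
    exact div_mem (add_mem (add_mem (mul_mem hv2 hv3) (mul_mem hv2 hv4)) (mul_mem hv3 hv4)) hv1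
  have hE4 : x0 * x1 * x2 * x3 ∈ E := by
    have hid : x0 * x1 * x2 * x3
        = ((x0 * x1 + x2 * x3) * (x0 * x2 + x1 * x3) * (x0 * x3 + x1 * x2)
            + (x0 * x1 * x2 + x0 * x1 * x3 + x0 * x2 * x3 + x1 * x2 * x3) ^ 2)
          / (x0 + x1 + x2 + x3) ^ 2 := by
      rw [eq_div_iff (pow_ne_zero 2 hv1ne)]
      linear_combination (-((x1 * x2 * x3) ^ 2 + (x0 * x2 * x3) ^ 2
        + (x0 * x1 * x3) ^ 2 + (x0 * x1 * x2) ^ 2)) * h2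
    rw [hid]
    exact div_mem (add_mem (mul_mem (mul_mem hv2 hv3) hv4) (pow_mem hE3 2)) (pow_mem hv1 2)
  -- Step 1 : E is contained in the fixed field
  have hle : E ≤ IntermediateField.fixedField H := by
    rw [hE, IntermediateField.adjoin_le_iff]
    intro w hw
    rintro ⟨g, hg⟩
    exact hfix w hw g hg
  -- Step 2 : [L : E] ≤ 4
  let q : Polynomial ↥E := Polynomial.X ^ 4
    + Polynomial.C (⟨_, hv1⟩ : ↥E) * Polynomial.X ^ 3
    + Polynomial.C (⟨_, hE2⟩ : ↥E) * Polynomial.X ^ 2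
    + Polynomial.C (⟨_, hE3⟩ : ↥E) * Polynomial.X
    + Polynomial.C (⟨_, hE4⟩ : ↥E)
  have hqmonic : q.Monic := by
    unfold q; monicity!
  have hqaeval : Polynomial.aeval x0 q = 0 := by
    have halg : ∀ (y : L) (hy : y ∈ E),
        algebraMap ↥E L ⟨y, hy⟩ = y := fun y hy => rfl
    simp only [q, map_add, map_mul, map_pow, Polynomial.aeval_X, Polynomial.aeval_C, halg]
    linear_combination (x0 * x1 * x2 * x3 + x0 ^ 2 * x2 * x3 + x0 ^ 2 * x1 * x3
      + x0 ^ 2 * x1 * x2 + x0 ^ 3 * x3 + x0 ^ 3 * x2 + x0 ^ 3 * x1 + x0 ^ 4) * h2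
  have hint : IsIntegral ↥E x0 := ⟨q, hqmonic, by rwa [← Polynomial.aeval_def]⟩
  have hEsub : ∀ y ∈ E, y ∈ IntermediateField.adjoin ↥E {x0} := by
    intro y hy
    exact IntermediateField.algebraMap_mem (IntermediateField.adjoin ↥E {x0})
      (⟨y, hy⟩ : ↥E)
  have hx0mem : x0 ∈ IntermediateField.adjoin ↥E {x0} :=
    IntermediateField.subset_adjoin _ _ rfl
  have hadj : IntermediateField.adjoin ↥E {x0} = ⊤ := by
    apply IntermediateField.restrictScalars_injective K
    rw [IntermediateField.restrictScalars_top, eq_top_iff, ← htop,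
      IntermediateField.adjoin_le_iff]
    have hdmem : (x0 + x1 + x2 + x3) * x0 ^ 2
        + (x0 * x1 * x2 + x0 * x1 * x3 + x0 * x2 * x3 + x1 * x2 * x3)
        ∈ IntermediateField.adjoin ↥E {x0} :=
      add_mem (mul_mem (hEsub _ hv1) (pow_mem hx0mem 2)) (hEsub _ hE3)
    have hx1mem : x1 ∈ IntermediateField.adjoin ↥E {x0} := by
      have hp1 : (x0 + x1) * ((x0 + x1 + x2 + x3) * x0 ^ 2
            + (x0 * x1 * x2 + x0 * x1 * x3 + x0 * x2 * x3 + x1 * x2 * x3))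
          = ((x0 + x1 + x2 + x3) * x0 + (x0 * x2 + x1 * x3))
            * ((x0 + x1 + x2 + x3) * x0 + (x0 * x3 + x1 * x2)) := by
        linear_combination (-(x0 * x1 * x3 ^ 2 + x0 * x1 * x2 ^ 2 + x0 ^ 2 * x3 ^ 2
          + 2 * x0 ^ 2 * x2 * x3 + x0 ^ 2 * x2 ^ 2 + x0 ^ 2 * x1 * x3 + x0 ^ 2 * x1 * x2
          + x0 ^ 3 * x3 + x0 ^ 3 * x2)) * h2
      have hkey : x1 = x0 + ((x0 + x1 + x2 + x3) * x0 + (x0 * x2 + x1 * x3))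
          * ((x0 + x1 + x2 + x3) * x0 + (x0 * x3 + x1 * x2))
          / ((x0 + x1 + x2 + x3) * x0 ^ 2
            + (x0 * x1 * x2 + x0 * x1 * x3 + x0 * x2 * x3 + x1 * x2 * x3)) := by
        rw [← hp1, mul_div_cancel_right₀ _ hdne]
        linear_combination (-x0) * h2
      rw [hkey]
      exact add_mem hx0mem (div_mem (mul_mem
        (add_mem (mul_mem (hEsub _ hv1) hx0mem) (hEsub _ hv3))
        (add_mem (mul_mem (hEsub _ hv1) hx0mem) (hEsub _ hv4))) hdmem)
    have hx2mem : x2 ∈ IntermediateField.adjoin ↥E {x0} := by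
      have hp2 : (x0 + x2) * ((x0 + x1 + x2 + x3) * x0 ^ 2
            + (x0 * x1 * x2 + x0 * x1 * x3 + x0 * x2 * x3 + x1 * x2 * x3))
          = ((x0 + x1 + x2 + x3) * x0 + (x0 * x1 + x2 * x3))
            * ((x0 + x1 + x2 + x3) * x0 + (x0 * x3 + x1 * x2)) := by
        linear_combination (-(x0 * x2 * x3 ^ 2 + x0 * x1 ^ 2 * x2 + x0 ^ 2 * x3 ^ 2
          + x0 ^ 2 * x2 * x3 + 2 * x0 ^ 2 * x1 * x3 + x0 ^ 2 * x1 * x2 + x0 ^ 2 * x1 ^ 2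
          + x0 ^ 3 * x3 + x0 ^ 3 * x1)) * h2
      have hkey : x2 = x0 + ((x0 + x1 + x2 + x3) * x0 + (x0 * x1 + x2 * x3))
          * ((x0 + x1 + x2 + x3) * x0 + (x0 * x3 + x1 * x2))
          / ((x0 + x1 + x2 + x3) * x0 ^ 2
            + (x0 * x1 * x2 + x0 * x1 * x3 + x0 * x2 * x3 + x1 * x2 * x3)) := by
        rw [← hp2, mul_div_cancel_right₀ _ hdne]
        linear_combination (-x0) * h2
      rw [hkey]
      exact add_mem hx0mem (div_mem (mul_mem
        (add_mem (mul_mem (hEsub _ hv1) hx0mem) (hEsub _ hv2))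
        (add_mem (mul_mem (hEsub _ hv1) hx0mem) (hEsub _ hv4))) hdmem)
    have hx3mem : x3 ∈ IntermediateField.adjoin ↥E {x0} := by
      have hp3 : (x0 + x3) * ((x0 + x1 + x2 + x3) * x0 ^ 2
            + (x0 * x1 * x2 + x0 * x1 * x3 + x0 * x2 * x3 + x1 * x2 * x3))
          = ((x0 + x1 + x2 + x3) * x0 + (x0 * x1 + x2 * x3))
            * ((x0 + x1 + x2 + x3) * x0 + (x0 * x2 + x1 * x3)) := by
        linear_combination (-(x0 * x2 ^ 2 * x3 + x0 * x1 ^ 2 * x3 + x0 ^ 2 * x2 * x3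
          + x0 ^ 2 * x2 ^ 2 + x0 ^ 2 * x1 * x3 + 2 * x0 ^ 2 * x1 * x2 + x0 ^ 2 * x1 ^ 2
          + x0 ^ 3 * x2 + x0 ^ 3 * x1)) * h2
      have hkey : x3 = x0 + ((x0 + x1 + x2 + x3) * x0 + (x0 * x1 + x2 * x3))
          * ((x0 + x1 + x2 + x3) * x0 + (x0 * x2 + x1 * x3))
          / ((x0 + x1 + x2 + x3) * x0 ^ 2
            + (x0 * x1 * x2 + x0 * x1 * x3 + x0 * x2 * x3 + x1 * x2 * x3)) := by
        rw [← hp3, mul_div_cancel_right₀ _ hdne]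
        linear_combination (-x0) * h2
      rw [hkey]
      exact add_mem hx0mem (div_mem (mul_mem
        (add_mem (mul_mem (hEsub _ hv1) hx0mem) (hEsub _ hv2))
        (add_mem (mul_mem (hEsub _ hv1) hx0mem) (hEsub _ hv3))) hdmem)
    rintro y (rfl | rfl | rfl | rfl)
    · exact hx0mem
    · exact hx1mem
    · exact hx2mem
    · exact hx3mem
  haveI hfd : FiniteDimensional ↥E L := by
    haveI h1 : FiniteDimensional ↥E ↥(IntermediateField.adjoin ↥E {x0}) :=
      IntermediateField.adjoin.finiteDimensional hint
    rw [hadj] at h1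
    exact (IntermediateField.topEquiv
      (F := ↥E) (E := L)).toLinearEquiv.finiteDimensional
  have hrank4 : Module.finrank ↥E L ≤ 4 := by
    have h1 : Module.finrank ↥E ↥(IntermediateField.adjoin ↥E {x0})
        = (minpoly ↥E x0).natDegree := IntermediateField.adjoin.finrank hint
    have hdeg : (minpoly ↥E x0).natDegree ≤ 4 := by
      have hmin := minpoly.min (A := ↥E) x0 hqmonic hqaeval
      have hnd := Polynomial.natDegree_le_natDegree hmin
      have hq4 : q.natDegree = 4 := by
        unfold q; compute_degree!
      omega
    rw [hadj, IntermediateField.finrank_top'] at h1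
    omega
  -- Step 3 : the fixed field has degree 4
  haveI : Fintype ↥H := Fintype.ofFinite _
  haveI : FaithfulSMul ↥H L :=
    ⟨fun {g1 g2} h => Subtype.ext (AlgEquiv.ext fun x => h x)⟩
  have hfix4 : Module.finrank ↥(IntermediateField.fixedField H) L = 4 := by
    calc Module.finrank ↥(IntermediateField.fixedField H) L
        = Fintype.card ↥H := FixedPoints.finrank_eq_card ↥H L
      _ = Nat.card ↥H := (Nat.card_eq_fintype_card).symm
      _ = 4 := hcard
  exact (IntermediateField.eq_of_le_of_finrank_le' hle (by rw [hfix4]; exact hrank4)).symm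

end KleinAux

set_option maxHeartbeats 1000000 in
set_option synthInstance.maxHeartbeats 400000 in
/-- **Generators of the fixed field of the Klein four-group in characteristic 2.**
Let `K` be a field of characteristic 2 and `V₄ ⊂ S₄` the Klein four-group generated by
`(1,2)(3,4)` and `(1,3)(2,4)` (indices written `0,…,3`), acting on `K(x₁,x₂,x₃,x₄)` by
permuting the variables. Then `K(x₁,x₂,x₃,x₄)^{V₄}` is generated over `K` by
`v₁ = x₁+x₂+x₃+x₄`, `v₂ = x₁x₂+x₃x₄`, `v₃ = x₁x₃+x₂x₄` and `v₄ = x₁x₄+x₂x₃`. -/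
theorem fixedField_klein_four_char_two (K : Type) [Field K] [CharP K 2] :
    fixedSub K (Fin 4) (Subgroup.closure
        {Equiv.swap (0 : Fin 4) 1 * Equiv.swap 2 3,
         Equiv.swap (0 : Fin 4) 2 * Equiv.swap 1 3}) =
      IntermediateField.adjoin K
        {Xvar K (Fin 4) 0 + Xvar K (Fin 4) 1 + Xvar K (Fin 4) 2 + Xvar K (Fin 4) 3,
         Xvar K (Fin 4) 0 * Xvar K (Fin 4) 1 + Xvar K (Fin 4) 2 * Xvar K (Fin 4) 3,
         Xvar K (Fin 4) 0 * Xvar K (Fin 4) 2 + Xvar K (Fin 4) 1 * Xvar K (Fin 4) 3,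
         Xvar K (Fin 4) 0 * Xvar K (Fin 4) 3 + Xvar K (Fin 4) 1 * Xvar K (Fin 4) 2} := by
  classical
  have h2 := KleinAux.two_eq_zero K (Fin 4)
  have htop : IntermediateField.adjoin K
      {Xvar K (Fin 4) 0, Xvar K (Fin 4) 1, Xvar K (Fin 4) 2, Xvar K (Fin 4) 3} = ⊤ := by
    rw [← KleinAux.adjoin_range_Xvar K (Fin 4)]
    congr 1
    ext y
    constructor
    · rintro (rfl | rfl | rfl | rfl)
      exacts [⟨0, rfl⟩, ⟨1, rfl⟩, ⟨2, rfl⟩, ⟨3, rfl⟩]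
    · rintro ⟨i, rfl⟩
      fin_cases i
      · left; rfl
      · right; left; rfl
      · right; right; left; rfl
      · right; right; right; rfl
  set H := Subgroup.map (permHom K (Fin 4))
    (Subgroup.closure {KleinAux.pa, KleinAux.pb}) with hH
  show IntermediateField.fixedField H = _
  have hcard : Nat.card ↥H = 4 := by
    rw [hH, ← Nat.card_congr (Subgroup.equivMapOfInjective _ _
      (KleinAux.permHom_injective K (Fin 4))).toEquiv,
      KleinAux.closure_eq_kleinW, KleinAux.card_kleinW]
  haveI : Finite ↥H := Nat.finite_of_card_ne_zero (by omega)
  have hfix : ∀ v ∈ ({Xvar K (Fin 4) 0 + Xvar K (Fin 4) 1 + Xvar K (Fin 4) 2 + Xvar K (Fin 4) 3,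
      Xvar K (Fin 4) 0 * Xvar K (Fin 4) 1 + Xvar K (Fin 4) 2 * Xvar K (Fin 4) 3,
      Xvar K (Fin 4) 0 * Xvar K (Fin 4) 2 + Xvar K (Fin 4) 1 * Xvar K (Fin 4) 3,
      Xvar K (Fin 4) 0 * Xvar K (Fin 4) 3 + Xvar K (Fin 4) 1 * Xvar K (Fin 4) 2} :
        Set (RFF K (Fin 4))), ∀ g ∈ H, g v = v := by
    intro w hw g hg
    obtain ⟨σ, hσ, rfl⟩ := hg
    have hgen : ∀ τ ∈ ({KleinAux.pa, KleinAux.pb} : Set (Equiv.Perm (Fin 4))),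
        permHom K (Fin 4) τ w = w := by
      intro τ hτ
      have e1 : Equiv.swap (0 : Fin 4) 1 (Equiv.swap 2 3 0) = 1 := by decide
      have e2 : Equiv.swap (0 : Fin 4) 1 (Equiv.swap 2 3 1) = 0 := by decide
      have e3 : Equiv.swap (0 : Fin 4) 1 (Equiv.swap 2 3 2) = 3 := by decide
      have e4 : Equiv.swap (0 : Fin 4) 1 (Equiv.swap 2 3 3) = 2 := by decide
      have f1 : Equiv.swap (0 : Fin 4) 2 (Equiv.swap 1 3 0) = 2 := by decide
      have f2 : Equiv.swap (0 : Fin 4) 2 (Equiv.swap 1 3 1) = 3 := by decide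
      have f3 : Equiv.swap (0 : Fin 4) 2 (Equiv.swap 1 3 2) = 0 := by decide
      have f4 : Equiv.swap (0 : Fin 4) 2 (Equiv.swap 1 3 3) = 1 := by decide
      rcases hτ with rfl | rfl <;> rcases hw with rfl | rfl | rfl | rfl <;>
        · simp only [map_add, map_mul, AlgEquiv.mul_apply,
            KleinAux.permHom_Xvar, e1, e2, e3, e4, f1, f2, f3, f4]
          ring
    induction hσ using Subgroup.closure_induction with
    | mem τ hτ => exact hgen τ hτ
    | one => simp
    | mul τ υ _ _ ihτ ihυ => rw [map_mul, AlgEquiv.mul_apply, ihυ, ihτ]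
    | inv τ _ ihτ =>
      rw [map_inv]
      change (permHom K (Fin 4) τ).symm w = w
      rw [AlgEquiv.symm_apply_eq, ihτ]
  exact KleinAux.general (Xvar K (Fin 4) 0) (Xvar K (Fin 4) 1) (Xvar K (Fin 4) 2)
    (Xvar K (Fin 4) 3) h2 (KleinAux.v1_ne K)
    (KleinAux.X_add_X_ne K (by decide : (0 : Fin 4) ≠ 1))
    (KleinAux.X_add_X_ne K (by decide : (0 : Fin 4) ≠ 2))
    (KleinAux.X_add_X_ne K (by decide : (0 : Fin 4) ≠ 3))
    htop H hcard hfix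
end
end
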